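/- Let ρ₀, ρ₁ be states on H_S and define ω = (1/2)|0⟩⟨0| ⊗ ρ₀ + (1/2)|1⟩⟨1| ⊗ ρ₁ on ℂ² ⊗ H_S. Then for every state σ_A on ℂ² and every state σ_S on H_S, ‖σ_A ⊗ σ_S − ω‖₁ ≥ (1/2)‖ρ₀ − ρ₁‖₁ − 1/2. In particular, if ‖ρ₀ − ρ₁‖₁ ≥ 2 − δ then every product state on ℂ² ⊗ H_S is at least (1−δ)/2-far from ω in trace norm. -/

import Mathlib

open scoped Kronecker ComplexOrder
open Matrix

/-- The trace norm (Schatten 1-norm) of a complex matrix: `Tr √(Xᴴ X)`. -/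
noncomputable def traceNorm {n : Type*} [Fintype n] [DecidableEq n] (X : Matrix n n ℂ) : ℝ :=
  ((((Matrix.posSemidef_conjTranspose_mul_self X).isHermitian.eigenvectorUnitary : Matrix n n ℂ) *
      diagonal (((↑) : ℝ → ℂ) ∘ Real.sqrt ∘ (Matrix.posSemidef_conjTranspose_mul_self X).isHermitian.eigenvalues) *
      (star (Matrix.posSemidef_conjTranspose_mul_self X).isHermitian.eigenvectorUnitary :
        Matrix n n ℂ) : Matrix n n ℂ).trace).re

/-- A quantum state: a positive semidefinite matrix with unit trace. -/
def IsState {n : Type*} [Fintype n] (ρ : Matrix n n ℂ) : Prop :=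
  ρ.PosSemidef ∧ ρ.trace = 1

/-- The outer product `|v⟩⟨v|`. -/
def outer {n : Type*} (v : n → ℂ) : Matrix n n ℂ :=
  Matrix.of fun i j => v i * star (v j)

/-- A unit vector. -/
def IsUnitVec {n : Type*} [Fintype n] (v : n → ℂ) : Prop :=
  ∑ i, star (v i) * v i = 1

/-- A bipartite separable state: a finite convex combination of tensor products of states. -/
def SeparableState {a b : Type*} [Fintype a] [Fintype b]
    (σ : Matrix (a × b) (a × b) ℂ) : Prop :=
  ∃ (m : ℕ) (p : Fin m → ℝ) (σA : Fin m → Matrix a a ℂ) (σB : Fin m → Matrix b b ℂ),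
    (∀ y, 0 ≤ p y) ∧ (∑ y, p y = 1) ∧ (∀ y, IsState (σA y)) ∧ (∀ y, IsState (σB y)) ∧
    σ = ∑ y, (p y : ℂ) • (σA y ⊗ₖ σB y)

/-- A maximally entangled unit vector `(1/√d) Σ_k |e_k⟩ ⊗ |f_k⟩` built from two
orthonormal bases `e`, `f` of `ℂ^d`. -/
def MaxEntangled {d : ℕ} (φ : Fin d × Fin d → ℂ) : Prop :=
  ∃ e f : Fin d → Fin d → ℂ,
    (∀ i j, ∑ x, star (e i x) * e j x = if i = j then (1 : ℂ) else 0) ∧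
    (∀ i j, ∑ x, star (f i x) * f j x = if i = j then (1 : ℂ) else 0) ∧
    ∀ x, φ x = ((Real.sqrt d : ℂ))⁻¹ * ∑ k, e k x.1 * f k x.2

namespace Stmt12Aux

variable {n : Type*} [Fintype n] [DecidableEq n]

lemma trace_mul_diag (X : Matrix n n ℂ) (d : n → ℂ) :
    (X * diagonal d).trace = ∑ i, X i i * d i := by
  simp [Matrix.trace, Matrix.diag, Matrix.mul_diagonal]

lemma trace_conj_diag (U : Matrix n n ℂ) (hU : Uᴴ * U = 1) (c : n → ℂ) :
    (U * diagonal c * Uᴴ).trace = ∑ i, c i := by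
  rw [Matrix.trace_mul_cycle, hU, Matrix.one_mul, Matrix.trace_diagonal]

lemma conj_diag_mul_conj_diag (U : Matrix n n ℂ) (hU : Uᴴ * U = 1) (c d : n → ℂ) :
    (U * diagonal c * Uᴴ) * (U * diagonal d * Uᴴ)
      = U * diagonal (fun i => c i * d i) * Uᴴ := by
  have : U * diagonal c * Uᴴ * (U * diagonal d * Uᴴ)
      = U * (diagonal c * (Uᴴ * U) * diagonal d) * Uᴴ := by
    simp only [Matrix.mul_assoc]
  rw [this, hU, Matrix.mul_one, Matrix.diagonal_mul_diagonal]

lemma quad_bound (U : Matrix n n ℂ) (hU : Uᴴ * U = 1) (c : n → ℂ)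
    (hc : ∀ i, ‖c i‖ ≤ 1) (v : n → ℂ) :
    ‖star v ⬝ᵥ (U * diagonal c * Uᴴ) *ᵥ v‖ ≤ (star v ⬝ᵥ v).re := by
  have hU' : U * Uᴴ = 1 := mul_eq_one_comm.mp hU
  set w := Uᴴ *ᵥ v with hwdef
  have hsw : star w = star v ᵥ* U := by
    rw [hwdef, Matrix.star_mulVec, Matrix.conjTranspose_conjTranspose]
  have key : ∀ x : n → ℂ, star v ⬝ᵥ (U *ᵥ x) = star w ⬝ᵥ x := by
    intro x
    rw [Matrix.dotProduct_mulVec, hsw]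
  have h1 : star v ⬝ᵥ (U * diagonal c * Uᴴ) *ᵥ v = star w ⬝ᵥ (diagonal c *ᵥ w) := by
    rw [← Matrix.mulVec_mulVec, ← Matrix.mulVec_mulVec, key]
  have h2 : star w ⬝ᵥ w = star v ⬝ᵥ v := by
    have : w = Uᴴ *ᵥ v := rfl
    calc star w ⬝ᵥ w = star v ⬝ᵥ (U *ᵥ w) := (key w).symm
      _ = star v ⬝ᵥ ((U * Uᴴ) *ᵥ v) := by rw [Matrix.mulVec_mulVec]
      _ = star v ⬝ᵥ v := by rw [hU', Matrix.one_mulVec]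
  rw [h1]
  have hdot : star w ⬝ᵥ (diagonal c *ᵥ w) = ∑ i, c i * (star (w i) * w i) := by
    simp only [dotProduct, Matrix.mulVec_diagonal, Pi.star_apply]
    exact Finset.sum_congr rfl fun i _ => by ring
  rw [hdot, ← h2]
  have hterm : ∀ z : ℂ, star z * z = (Complex.normSq z : ℂ) := fun z => by
    rw [Complex.star_def, mul_comm, Complex.mul_conj]
  calc ‖∑ i, c i * (star (w i) * w i)‖
      ≤ ∑ i, ‖c i * (star (w i) * w i)‖ :=
        norm_sum_le _ _
    _ ≤ ∑ i, Complex.normSq (w i) := by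
        apply Finset.sum_le_sum
        intro i _
        rw [hterm, norm_mul, Complex.norm_real, Real.norm_of_nonneg (Complex.normSq_nonneg _)]
        exact mul_le_of_le_one_left (Complex.normSq_nonneg _) (hc i)
    _ = (star w ⬝ᵥ w).re := by
        rw [dotProduct, Complex.re_sum]
        exact Finset.sum_congr rfl fun i _ => by
          rw [Pi.star_apply, hterm, Complex.ofReal_re]

lemma unitary_hU (A : Matrix n n ℂ) (hA : A.IsHermitian) :
    ((hA.eigenvectorUnitary : Matrix n n ℂ))ᴴ * (hA.eigenvectorUnitary : Matrix n n ℂ) = 1 := by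
  rw [← Matrix.star_eq_conjTranspose]
  exact Matrix.mem_unitaryGroup_iff'.mp hA.eigenvectorUnitary.2

lemma spectral' (A : Matrix n n ℂ) (hA : A.IsHermitian) :
    A = (hA.eigenvectorUnitary : Matrix n n ℂ)
        * diagonal (fun i => (hA.eigenvalues i : ℂ))
        * (hA.eigenvectorUnitary : Matrix n n ℂ)ᴴ := by
  conv_lhs => rw [hA.spectral_theorem]
  rw [Unitary.conjStarAlgAut_apply]
  rfl

lemma traceNorm_hermitian (A : Matrix n n ℂ) (hA : A.IsHermitian) :
    traceNorm A = ∑ i, |hA.eigenvalues i| := by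
  set U : Matrix n n ℂ := (hA.eigenvectorUnitary : Matrix n n ℂ) with hUdef
  have hU : Uᴴ * U = 1 := unitary_hU A hA
  have hsa : IsSelfAdjoint A := hA
  have hAA := (Matrix.posSemidef_conjTranspose_mul_self A).isHermitian
  have e0 : traceNorm A = ((cfc Real.sqrt (Aᴴ * A)).trace).re := by
    rw [hAA.cfc_eq]; rfl
  have e1 : Aᴴ * A = cfc (fun x : ℝ => x * x) A := by
    rw [cfc_mul (fun x : ℝ => x) (fun x : ℝ => x) A, cfc_id' ℝ A, hA.eq]
  rw [e0, e1, ← cfc_comp Real.sqrt (fun x : ℝ => x * x) A]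
  have e2 : (Real.sqrt ∘ fun x : ℝ => x * x) = fun x => |x| :=
    funext fun x => Real.sqrt_mul_self_eq_abs x
  rw [e2, hA.cfc_eq]
  show ((U * diagonal (fun i => ((|hA.eigenvalues i| : ℝ) : ℂ)) * Uᴴ).trace).re = _
  rw [trace_conj_diag U hU, Complex.re_sum]
  exact Finset.sum_congr rfl fun i _ => Complex.ofReal_re _

lemma traceNorm_nonneg' (A : Matrix n n ℂ) (hA : A.IsHermitian) : 0 ≤ traceNorm A := by
  rw [traceNorm_hermitian A hA]
  exact Finset.sum_nonneg fun i _ => abs_nonneg _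

/-- Key duality bound: for Hermitian `A` and `M` an operator-norm contraction
(expressed via the quadratic-form bound), `|Re Tr(M A)| ≤ ‖A‖₁`. -/
lemma abs_re_trace_le (A M : Matrix n n ℂ) (hA : A.IsHermitian)
    (hM : ∀ v : n → ℂ, ‖star v ⬝ᵥ M *ᵥ v‖ ≤ (star v ⬝ᵥ v).re) :
    |((M * A).trace).re| ≤ traceNorm A := by
  set U : Matrix n n ℂ := (hA.eigenvectorUnitary : Matrix n n ℂ) with hUdef
  have hU : Uᴴ * U = 1 := unitary_hU A hA
  have expand : (M * A).trace = ∑ i, (Uᴴ * M * U) i i * (hA.eigenvalues i : ℂ) := by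
    conv_lhs => rw [spectral' A hA]
    rw [show M * (U * diagonal (fun i => (hA.eigenvalues i : ℂ)) * Uᴴ)
        = (M * U * diagonal (fun i => (hA.eigenvalues i : ℂ))) * Uᴴ by
      simp only [Matrix.mul_assoc]]
    rw [Matrix.trace_mul_comm, ← Matrix.mul_assoc, ← Matrix.mul_assoc, trace_mul_diag]
  have col : ∀ i, (Uᴴ * M * U) i i
      = star (fun j => U j i) ⬝ᵥ M *ᵥ (fun j => U j i) := by
    intro i
    simp only [Matrix.mul_apply, Matrix.conjTranspose_apply, dotProduct,
      Matrix.mulVec, Pi.star_apply, dotProduct]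
    simp only [Finset.sum_mul, Finset.mul_sum]
    rw [Finset.sum_comm]
    exact Finset.sum_congr rfl fun j _ => Finset.sum_congr rfl fun k _ => by ring
  have unitcol : ∀ i, (star (fun j => U j i) ⬝ᵥ (fun j => U j i)) = 1 := by
    intro i
    have h := congrFun (congrFun hU i) i
    simp only [Matrix.mul_apply, Matrix.conjTranspose_apply, Matrix.one_apply_eq] at h
    simpa [dotProduct] using h
  have hcoef : ∀ i, ‖(Uᴴ * M * U) i i‖ ≤ 1 := by
    intro i
    have := hM (fun j => U j i)
    rw [← col i] at this
    rw [unitcol i] at this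
    simpa using this
  rw [traceNorm_hermitian A hA, expand, Complex.re_sum]
  calc |∑ i, ((Uᴴ * M * U) i i * (hA.eigenvalues i : ℂ)).re|
      ≤ ∑ i, |((Uᴴ * M * U) i i * (hA.eigenvalues i : ℂ)).re| :=
        Finset.abs_sum_le_sum_abs _ _
    _ ≤ ∑ i, |hA.eigenvalues i| := by
        apply Finset.sum_le_sum
        intro i _
        calc |((Uᴴ * M * U) i i * (hA.eigenvalues i : ℂ)).re|
            ≤ ‖(Uᴴ * M * U) i i * (hA.eigenvalues i : ℂ)‖ :=
              Complex.abs_re_le_norm _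
          _ = ‖(Uᴴ * M * U) i i‖ * |hA.eigenvalues i| := by
              rw [norm_mul, Complex.norm_real, Real.norm_eq_abs]
          _ ≤ 1 * |hA.eigenvalues i| := by
              apply mul_le_mul_of_nonneg_right (hcoef i) (abs_nonneg _)
          _ = |hA.eigenvalues i| := one_mul _

lemma trace_eq_sum_eigen (A : Matrix n n ℂ) (hA : A.IsHermitian) :
    A.trace = ∑ i, (hA.eigenvalues i : ℂ) := by
  conv_lhs => rw [spectral' A hA]
  rw [trace_conj_diag _ (unitary_hU A hA)]

lemma traceNorm_of_state (σ : Matrix n n ℂ) (h : IsState σ) : traceNorm σ = 1 := by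
  rw [traceNorm_hermitian σ h.1.isHermitian]
  have h1 : ((∑ i, h.1.isHermitian.eigenvalues i : ℝ) : ℂ) = 1 := by
    rw [Complex.ofReal_sum]
    rw [← trace_eq_sum_eigen σ h.1.isHermitian, h.2]
  have h2 : ∑ i, h.1.isHermitian.eigenvalues i = 1 := by exact_mod_cast h1
  rw [← h2]
  exact Finset.sum_congr rfl fun i _ => abs_of_nonneg (h.1.eigenvalues_nonneg i)

lemma trace_mul_real (M A : Matrix n n ℂ) (hM : M.IsHermitian) (hA : A.IsHermitian) :
    (M * A).trace = (((M * A).trace).re : ℂ) := by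
  refine (Complex.conj_eq_iff_re.mp ?_).symm
  calc (starRingEnd ℂ) ((M * A).trace) = ((M * A)ᴴ).trace := (Matrix.trace_conjTranspose _).symm
    _ = (Aᴴ * Mᴴ).trace := by rw [Matrix.conjTranspose_mul]
    _ = (A * M).trace := by rw [hA.eq, hM.eq]
    _ = (M * A).trace := Matrix.trace_mul_comm _ _

lemma kron_conjTranspose {a b : Type*} (A : Matrix a a ℂ) (B : Matrix b b ℂ) :
    (A ⊗ₖ B)ᴴ = Aᴴ ⊗ₖ Bᴴ := by
  ext ⟨i, j⟩ ⟨k, l⟩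
  simp [Matrix.conjTranspose_apply]


lemma kron_conj_diag {a : Type*} [Fintype a] [DecidableEq a]
    (U : Matrix n n ℂ) (c2 : a → ℂ) (c : n → ℂ) :
    diagonal c2 ⊗ₖ (U * diagonal c * Uᴴ)
      = ((1 : Matrix a a ℂ) ⊗ₖ U) * diagonal (fun p : a × n => c2 p.1 * c p.2)
        * ((1 : Matrix a a ℂ) ⊗ₖ U)ᴴ := by
  rw [kron_conjTranspose, Matrix.conjTranspose_one, ← Matrix.diagonal_kronecker_diagonal,
    ← Matrix.mul_kronecker_mul, ← Matrix.mul_kronecker_mul]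
  simp only [Matrix.one_mul, Matrix.mul_one]

lemma kron_unitary {a : Type*} [Fintype a] [DecidableEq a]
    (U : Matrix n n ℂ) (hU : Uᴴ * U = 1) :
    ((1 : Matrix a a ℂ) ⊗ₖ U)ᴴ * ((1 : Matrix a a ℂ) ⊗ₖ U) = 1 := by
  rw [kron_conjTranspose, Matrix.conjTranspose_one, ← Matrix.mul_kronecker_mul,
    Matrix.one_mul, hU, Matrix.one_kronecker_one]

lemma quad_bound_kron {a : Type*} [Fintype a] [DecidableEq a]
    (U : Matrix n n ℂ) (hU : Uᴴ * U = 1) (c2 : a → ℂ) (c : n → ℂ)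
    (hc2 : ∀ j, ‖c2 j‖ ≤ 1) (hc : ∀ i, ‖c i‖ ≤ 1)
    (v : a × n → ℂ) :
    ‖star v ⬝ᵥ (diagonal c2 ⊗ₖ (U * diagonal c * Uᴴ)) *ᵥ v‖
      ≤ (star v ⬝ᵥ v).re := by
  rw [kron_conj_diag]
  refine quad_bound _ (kron_unitary U hU) _ (fun p => ?_) v
  rw [norm_mul]
  have := mul_le_mul (hc2 p.1) (hc p.2) (norm_nonneg _) zero_le_one
  simpa using this

lemma sign_dual (A : Matrix n n ℂ) (hA : A.IsHermitian) :
    ∃ (U : Matrix n n ℂ) (c : n → ℂ), Uᴴ * U = 1 ∧ (∀ i, ‖c i‖ ≤ 1) ∧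
      (∀ i, IsSelfAdjoint (c i)) ∧
      ((U * diagonal c * Uᴴ) * A).trace = ((traceNorm A : ℝ) : ℂ) := by
  classical
  refine ⟨(hA.eigenvectorUnitary : Matrix n n ℂ),
    fun i => if 0 ≤ hA.eigenvalues i then 1 else -1, unitary_hU A hA, ?_, ?_, ?_⟩
  · intro i; dsimp only; split <;> simp
  · intro i; dsimp only; split <;> simp [_root_.IsSelfAdjoint]
  · set U : Matrix n n ℂ := (hA.eigenvectorUnitary : Matrix n n ℂ) with hUdef
    set c : n → ℂ := fun i => if 0 ≤ hA.eigenvalues i then 1 else -1 with hcdef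
    have hdiag : Uᴴ * A * U = diagonal (fun i => (hA.eigenvalues i : ℂ)) := by
      rw [hUdef, ← Matrix.star_eq_conjTranspose]
      have := hA.conjStarAlgAut_star_eigenvectorUnitary
      rw [Unitary.conjStarAlgAut_apply, Unitary.coe_star, star_star] at this
      exact this
    rw [show (U * diagonal c * Uᴴ) * A = U * (diagonal c * (Uᴴ * A)) by
        simp only [Matrix.mul_assoc],
      Matrix.trace_mul_comm,
      show diagonal c * (Uᴴ * A) * U = diagonal c * (Uᴴ * A * U) by
        simp only [Matrix.mul_assoc],
      hdiag, Matrix.diagonal_mul_diagonal, Matrix.trace_diagonal,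
      traceNorm_hermitian A hA, Complex.ofReal_sum]
    apply Finset.sum_congr rfl
    intro i _
    rw [hcdef]
    dsimp only
    split
    · next h => rw [one_mul, abs_of_nonneg h]
    · next h =>
        rw [abs_of_neg (lt_of_not_ge h)]
        push_cast
        ring

lemma quad_bound_diag (c : n → ℂ) (hc : ∀ i, ‖c i‖ ≤ 1) (v : n → ℂ) :
    ‖star v ⬝ᵥ (diagonal c) *ᵥ v‖ ≤ (star v ⬝ᵥ v).re := by
  have := quad_bound (1 : Matrix n n ℂ) (by simp) c hc v
  simpa using this

end Stmt12Aux

/-- For states `ρ₀, ρ₁` on `H_S` and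
`ω = (1/2)|0⟩⟨0| ⊗ ρ₀ + (1/2)|1⟩⟨1| ⊗ ρ₁` on `ℂ² ⊗ H_S`, every product state
`σ_A ⊗ σ_S` satisfies `‖σ_A ⊗ σ_S − ω‖₁ ≥ (1/2)‖ρ₀ − ρ₁‖₁ − 1/2`. In particular, if
`‖ρ₀ − ρ₁‖₁ ≥ 2 − δ` then every product state is at least `(1−δ)/2`-far from `ω`. -/
theorem stmt12 {S : Type*} [Fintype S] [DecidableEq S]
    (ρ₀ ρ₁ : Matrix S S ℂ) (h0 : IsState ρ₀) (h1 : IsState ρ₁)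
    (ω : Matrix (Fin 2 × S) (Fin 2 × S) ℂ)
    (hω : ω = (1 / 2 : ℂ) • ((!![1, 0; 0, 0] : Matrix (Fin 2) (Fin 2) ℂ) ⊗ₖ ρ₀)
        + (1 / 2 : ℂ) • ((!![0, 0; 0, 1] : Matrix (Fin 2) (Fin 2) ℂ) ⊗ₖ ρ₁)) :
    (∀ (σA : Matrix (Fin 2) (Fin 2) ℂ) (σS : Matrix S S ℂ), IsState σA → IsState σS →
      1 / 2 * traceNorm (ρ₀ - ρ₁) - 1 / 2 ≤ traceNorm (σA ⊗ₖ σS - ω)) ∧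
    (∀ δ : ℝ, 2 - δ ≤ traceNorm (ρ₀ - ρ₁) →
      ∀ (σA : Matrix (Fin 2) (Fin 2) ℂ) (σS : Matrix S S ℂ), IsState σA → IsState σS →
        (1 - δ) / 2 ≤ traceNorm (σA ⊗ₖ σS - ω)) := by
  have hH : (ρ₀ - ρ₁).IsHermitian := h0.1.isHermitian.sub h1.1.isHermitian
  obtain ⟨U, c, hU, hcabs, hcself, hTtr⟩ := Stmt12Aux.sign_dual (ρ₀ - ρ₁) hH
  set T : Matrix S S ℂ := U * diagonal c * Uᴴ with hTdef
  have hTherm : T.IsHermitian :=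
    Matrix.isHermitian_mul_mul_conjTranspose U (Matrix.isHermitian_diagonal_iff.mpr hcself)
  set D : ℝ := traceNorm (ρ₀ - ρ₁) with hDdef
  -- the Pauli-Z type matrix
  set d2 : Fin 2 → ℂ := ![1, -1] with hd2def
  have hd2abs : ∀ j, ‖d2 j‖ ≤ 1 := by
    intro j; fin_cases j <;> simp [hd2def]
  have hd2self : ∀ j, IsSelfAdjoint (d2 j) := by
    intro j; fin_cases j <;> simp [hd2def, _root_.IsSelfAdjoint]
  have hΔherm : (diagonal d2).IsHermitian := Matrix.isHermitian_diagonal_iff.mpr hd2self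
  have hΔ0 : (diagonal d2) * (!![1, 0; 0, 0] : Matrix (Fin 2) (Fin 2) ℂ) = !![1, 0; 0, 0] := by
    ext i j
    fin_cases i <;> fin_cases j <;>
      simp [Matrix.mul_apply, Fin.sum_univ_two, hd2def, Matrix.diagonal]
  have hΔ1 : (diagonal d2) * (!![0, 0; 0, 1] : Matrix (Fin 2) (Fin 2) ℂ) = !![0, 0; 0, -1] := by
    ext i j
    fin_cases i <;> fin_cases j <;>
      simp [Matrix.mul_apply, Fin.sum_univ_two, hd2def, Matrix.diagonal]
  have hP0herm : (!![1, 0; 0, 0] : Matrix (Fin 2) (Fin 2) ℂ).IsHermitian := by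
    rw [Matrix.IsHermitian]
    ext i j
    fin_cases i <;> fin_cases j <;> simp
  have hP1herm : (!![0, 0; 0, 1] : Matrix (Fin 2) (Fin 2) ℂ).IsHermitian := by
    rw [Matrix.IsHermitian]
    ext i j
    fin_cases i <;> fin_cases j <;> simp
  have hωherm : ω.IsHermitian := by
    rw [hω, Matrix.IsHermitian, Matrix.conjTranspose_add, Matrix.conjTranspose_smul,
      Matrix.conjTranspose_smul, Stmt12Aux.kron_conjTranspose, Stmt12Aux.kron_conjTranspose,
      h0.1.isHermitian.eq, h1.1.isHermitian.eq, hP0herm.eq, hP1herm.eq]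
    norm_num
  -- trace facts for T
  have hρb0 : |((T * ρ₀).trace).re| ≤ 1 := by
    have := Stmt12Aux.abs_re_trace_le ρ₀ T h0.1.isHermitian
      (Stmt12Aux.quad_bound U hU c hcabs)
    rwa [Stmt12Aux.traceNorm_of_state ρ₀ h0] at this
  have hρb1 : |((T * ρ₁).trace).re| ≤ 1 := by
    have := Stmt12Aux.abs_re_trace_le ρ₁ T h1.1.isHermitian
      (Stmt12Aux.quad_bound U hU c hcabs)
    rwa [Stmt12Aux.traceNorm_of_state ρ₁ h1] at this
  have hsplit : (T * (ρ₀ - ρ₁)).trace = (T * ρ₀).trace - (T * ρ₁).trace := by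
    rw [Matrix.mul_sub, Matrix.trace_sub]
  have hD2 : D ≤ 2 := by
    have : ((T * (ρ₀ - ρ₁)).trace).re = D := by rw [hTtr, Complex.ofReal_re]
    rw [hsplit] at this
    simp only [Complex.sub_re] at this
    have h0' := abs_le.mp hρb0
    have h1' := abs_le.mp hρb1
    linarith [h0'.1, h0'.2, h1'.1, h1'.2]
  have main : ∀ (σA : Matrix (Fin 2) (Fin 2) ℂ) (σS : Matrix S S ℂ),
      IsState σA → IsState σS →
      1 / 2 * traceNorm (ρ₀ - ρ₁) - 1 / 2 ≤ traceNorm (σA ⊗ₖ σS - ω) := by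
    intro σA σS hsA hsS
    have hσAh := hsA.1.isHermitian
    have hσSh := hsS.1.isHermitian
    have hXherm : (σA ⊗ₖ σS - ω).IsHermitian := by
      refine Matrix.IsHermitian.sub ?_ hωherm
      rw [Matrix.IsHermitian, Stmt12Aux.kron_conjTranspose, hσAh.eq, hσSh.eq]
    set N : ℝ := traceNorm (σA ⊗ₖ σS - ω) with hNdef
    -- trace computations
    have htr1 : ∀ (B : Matrix S S ℂ),
        ((diagonal d2 ⊗ₖ B) * (σA ⊗ₖ σS)).trace
          = ((diagonal d2) * σA).trace * (B * σS).trace := by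
      intro B
      rw [← Matrix.mul_kronecker_mul, Matrix.trace_kronecker]
    have htrω : ∀ (B : Matrix S S ℂ),
        ((diagonal d2 ⊗ₖ B) * ω).trace
          = (1 / 2 : ℂ) * (B * ρ₀).trace - (1 / 2 : ℂ) * (B * ρ₁).trace := by
      intro B
      rw [hω, Matrix.mul_add, Matrix.trace_add, mul_smul_comm, mul_smul_comm,
        Matrix.trace_smul, Matrix.trace_smul, ← Matrix.mul_kronecker_mul,
        ← Matrix.mul_kronecker_mul, Matrix.trace_kronecker, Matrix.trace_kronecker,
        hΔ0, hΔ1]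
      have e0 : (!![1, 0; 0, 0] : Matrix (Fin 2) (Fin 2) ℂ).trace = 1 := by
        simp [Matrix.trace_fin_two]
      have e1 : (!![0, 0; 0, -1] : Matrix (Fin 2) (Fin 2) ℂ).trace = -1 := by
        simp [Matrix.trace_fin_two]
      rw [e0, e1]
      simp only [smul_eq_mul]
      ring
    have hz := Stmt12Aux.trace_mul_real (diagonal d2) σA hΔherm hσAh
    have hw := Stmt12Aux.trace_mul_real T σS hTherm hσSh
    set x : ℝ := (((diagonal d2) * σA).trace).re with hxdef
    set t : ℝ := ((T * σS).trace).re with htdef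
    -- |x| ≤ 1 and |t| ≤ 1
    have hxb : |x| ≤ 1 := by
      have := Stmt12Aux.abs_re_trace_le σA (diagonal d2) hσAh
        (Stmt12Aux.quad_bound_diag d2 hd2abs)
      rwa [Stmt12Aux.traceNorm_of_state σA hsA] at this
    have htb : |t| ≤ 1 := by
      have := Stmt12Aux.abs_re_trace_le σS T hσSh (Stmt12Aux.quad_bound U hU c hcabs)
      rwa [Stmt12Aux.traceNorm_of_state σS hsS] at this
    -- witness 1 : diagonal d2 ⊗ T
    have hM2 : |(((diagonal d2 ⊗ₖ T) * (σA ⊗ₖ σS - ω)).trace).re| ≤ N :=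
      Stmt12Aux.abs_re_trace_le _ _ hXherm
        (Stmt12Aux.quad_bound_kron U hU d2 c hd2abs hcabs)
    have hval2 : (((diagonal d2 ⊗ₖ T) * (σA ⊗ₖ σS - ω)).trace).re = x * t - D / 2 := by
      rw [Matrix.mul_sub, Matrix.trace_sub, htr1 T, htrω T]
      have e : (1 / 2 : ℂ) * (T * ρ₀).trace - (1 / 2 : ℂ) * (T * ρ₁).trace
          = (1 / 2 : ℂ) * ((T * (ρ₀ - ρ₁)).trace) := by
        rw [hsplit]; ring
      rw [e, hTtr, hz, hw]
      have e2 : ((x : ℂ)) * ((t : ℂ)) - 1 / 2 * ((D : ℝ) : ℂ) = ((x * t - D / 2 : ℝ) : ℂ) := by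
        push_cast; ring
      rw [e2, Complex.ofReal_re]
    -- witness 2 : diagonal d2 ⊗ 1
    have hone : U * diagonal (fun _ : S => (1 : ℂ)) * Uᴴ = 1 := by
      rw [Matrix.diagonal_one, Matrix.mul_one, mul_eq_one_comm.mp hU]
    have hq1 : ∀ v : (Fin 2 × S) → ℂ,
        ‖star v ⬝ᵥ (diagonal d2 ⊗ₖ (1 : Matrix S S ℂ)) *ᵥ v‖
          ≤ (star v ⬝ᵥ v).re := by
      intro v
      have := Stmt12Aux.quad_bound_kron U hU d2 (fun _ => 1) hd2abs (by simp) v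
      rwa [hone] at this
    have hM1 : |(((diagonal d2 ⊗ₖ (1 : Matrix S S ℂ)) * (σA ⊗ₖ σS - ω)).trace).re| ≤ N :=
      Stmt12Aux.abs_re_trace_le _ _ hXherm hq1
    have hval1 : (((diagonal d2 ⊗ₖ (1 : Matrix S S ℂ)) * (σA ⊗ₖ σS - ω)).trace).re = x := by
      rw [Matrix.mul_sub, Matrix.trace_sub, htr1 1, htrω 1, Matrix.one_mul, Matrix.one_mul,
        Matrix.one_mul, hsS.2, h0.2, h1.2, hz]
      simp
    rw [hval2] at hM2
    rw [hval1] at hM1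
    have hxt : x * t ≤ |x| := by
      have : |x * t| ≤ |x| := by
        rw [abs_mul]
        exact mul_le_of_le_one_right (abs_nonneg x) htb
      exact le_trans (le_abs_self _) this
    have hub : D / 2 - x * t ≤ N := by
      have := (abs_le.mp hM2).1
      linarith
    have hub2 : |x| ≤ N := hM1
    rw [← hDdef]
    rcases le_or_gt |x| (1 / 2) with hcase | hcase
    · linarith
    · linarith
  refine ⟨main, ?_⟩
  intro δ hδ σA σS hsA hsS
  have := main σA σS hsA hsS
  rw [← hDdef] at this
  linarith
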